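/- Let V be an n-dimensional vector space and s an m-dimensional subspace with m ≤ n - k. Then the set X = {l ∈ G_k(V) : dim(l ∩ s) ≥ 1} contains no maximal regular set; i.e., for every basis B of V, some k-dimensional subspace spanned by vectors of B intersects s trivially. -/

import Mathlib

open Submodule

theorem no_maximal_regular_in_X (F V : Type*) [Field F] [AddCommGroup V] [Module F V]
    [FiniteDimensional F V] (n m k : ℕ) (hn : Module.finrank F V = n)
    (hk1 : 1 ≤ k) (hk2 : k ≤ n - 1)
    (s : Submodule F V) (hs : Module.finrank F s = m) (hm : m ≤ n - k) :
    ∀ B : Module.Basis (Fin n) F V, ∃ I : Finset (Fin n), I.card = k ∧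
      Submodule.span F (B '' (I : Set (Fin n))) ⊓ s = ⊥ := by
  classical
  intro B
  -- basis of s, pushed into V
  have : Module.Finite F s := inferInstance
  let bs : Module.Basis (Fin m) F s := Module.finBasisOfFinrankEq F s hs
  let f : Fin m → V := fun i => (bs i : V)
  have hf_li : LinearIndependent F f :=
    bs.linearIndependent.map' s.subtype s.ker_subtype
  set S : Set V := Set.range f with hS_def
  have hS_li : LinearIndependent F ((↑) : S → V) := (linearIndepOn_id_range_iff hf_li.injective).mpr hf_li
  have hspanS : Submodule.span F S = s := by
    have : S = s.subtype '' Set.range bs := by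
      rw [hS_def, ← Set.range_comp]; rfl
    rw [this, Submodule.span_image, bs.span_eq, Submodule.map_top, Submodule.range_subtype]
  -- extend S inside S ∪ range B
  have hsub : S ⊆ S ∪ Set.range B := Set.subset_union_left
  set E : Set V := (show LinearIndepOn F id S from hS_li).extend hsub with hE_def
  have hSE : S ⊆ E := (show LinearIndepOn F id S from hS_li).subset_extend hsub
  have hEsub : E ⊆ S ∪ Set.range B := (show LinearIndepOn F id S from hS_li).extend_subset hsub
  have hE_li : LinearIndependent F ((↑) : E → V) := (show LinearIndepOn F id S from hS_li).linearIndepOn_extend hsub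
  have hspanE : Submodule.span F E = ⊤ := by
    have h1 : Set.range B ⊆ Submodule.span F E :=
      (Set.subset_union_right).trans ((show LinearIndepOn F id S from hS_li).subset_span_extend hsub)
    have := Submodule.span_le.mpr h1
    rw [B.span_eq] at this
    exact top_le_iff.mp this
  have hEfin : E.Finite := hE_li.setFinite
  -- cardinalities
  haveI : Fintype E := hEfin.fintype
  have hE_card : Fintype.card E = n := by
    let bE : Module.Basis E F V := Module.Basis.mk hE_li (by rw [Subtype.range_coe, hspanE])
    rw [← Module.finrank_eq_card_basis bE, hn]
  have hEn : E.ncard = n := by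
    rw [Set.ncard_eq_toFinset_card', Set.toFinset_card, hE_card]
  have hf_inj : Function.Injective f := hf_li.injective
  have hSm : S.ncard = m := by
    rw [hS_def, Set.ncard_eq_toFinset_card', Set.toFinset_range,
      Finset.card_image_of_injective _ hf_inj, Finset.card_univ, Fintype.card_fin]
  have hDS : (E \ S).ncard = n - m := by
    rw [Set.ncard_diff hSE (hEfin.subset hSE), hEn, hSm]
  -- the indices whose basis vector lies in E \ S
  set J : Finset (Fin n) := Finset.univ.filter (fun i => B i ∈ E \ S) with hJ_def
  have hDsubR : E \ S ⊆ Set.range B := by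
    intro x hx
    rcases hEsub hx.1 with h | h
    · exact absurd h hx.2
    · exact h
  have hDfin : (E \ S).Finite := hEfin.diff
  have hJ_image : Finset.image B J = hDfin.toFinset := by
    ext x
    simp only [Finset.mem_image, hJ_def, Finset.mem_filter, Finset.mem_univ, true_and,
      Set.Finite.mem_toFinset]
    constructor
    · rintro ⟨i, hi, rfl⟩; exact hi
    · intro hx; rcases hDsubR hx with ⟨i, rfl⟩; exact ⟨i, hx, rfl⟩
  have hJ_card : J.card = n - m := by
    rw [← Finset.card_image_of_injective J B.injective, hJ_image,
      ← Set.ncard_eq_toFinset_card _ hDfin, hDS]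
  have hkJ : k ≤ J.card := by
    rw [hJ_card]; omega
  obtain ⟨I, hIJ, hIcard⟩ := Finset.exists_subset_card_eq hkJ
  refine ⟨I, hIcard, ?_⟩
  -- span of chosen vectors is inside span (E \ S), disjoint from span S = s
  have hBID : B '' (I : Set (Fin n)) ⊆ E \ S := by
    intro x hx
    rcases hx with ⟨i, hi, rfl⟩
    have := hIJ hi
    rw [hJ_def, Finset.mem_filter] at this
    exact this.2
  have hdisj : Disjoint (Submodule.span F (E \ S)) (Submodule.span F S) := by
    have h := hE_li.disjoint_span_image (s := (↑) ⁻¹' (E \ S)) (t := (↑) ⁻¹' S)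
      (by
        apply Set.disjoint_left.mpr
        intro a ha ha'
        exact (Set.mem_preimage.mp ha).2 (Set.mem_preimage.mp ha'))
    have h1 : (Subtype.val : E → V) '' ((↑) ⁻¹' (E \ S)) = E \ S := by
      rw [Subtype.image_preimage_coe]
      exact Set.inter_eq_right.mpr Set.diff_subset
    have h2 : (Subtype.val : E → V) '' ((↑) ⁻¹' S) = S := by
      rw [Subtype.image_preimage_coe]
      exact Set.inter_eq_right.mpr hSE
    rwa [h1, h2] at h
  have : Disjoint (Submodule.span F (B '' (I : Set (Fin n)))) s := by
    rw [← hspanS]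
    exact hdisj.mono_left (Submodule.span_mono hBID)
  exact disjoint_iff.mp this
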